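/- Let H be an n×m real matrix, y ∈ ℝⁿ and α ≥ 0, and let 𝒥 be a nonempty family of forbidden supports for the ℓ∞ problem. Define J^none := {1,…,m} \ ⋃_{J ∈ 𝒥} J and J^some := {1,…,m} \ (J^none ∪ ⋂_{J ∈ 𝒥} J). Then every x ∈ ℝᵐ with ‖y − Hx‖∞ ≤ α satisfies 2·#( supp(x) ∩ J^none ) + #( supp(x) ∩ J^some ) ≥ 2, where supp(x) = {j : x_j ≠ 0}. -/
import Mathlib


open scoped Classical
open Finset

noncomputable section SparseApprox

/-- ℓ₁ data misfit ‖y - Hx‖₁ = ∑ᵢ |yᵢ - (Hx)ᵢ|. -/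
def l1Misfit {n m : ℕ} (H : Matrix (Fin n) (Fin m) ℝ) (y : Fin n → ℝ)
    (x : Fin m → ℝ) : ℝ :=
  ∑ i, |y i - ∑ j, H i j * x j|

/-- ℓ∞ data misfit ‖y - Hx‖∞ = maxᵢ |yᵢ - (Hx)ᵢ|. -/
def linfMisfit {n m : ℕ} (H : Matrix (Fin n) (Fin m) ℝ) (y : Fin n → ℝ)
    (x : Fin m → ℝ) : ℝ :=
  ⨆ i, |y i - ∑ j, H i j * x j|

/-- `J` is a forbidden support for the ℓ₁ problem: every `x` with support
contained in `J` has ℓ₁ misfit exceeding `α`. -/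
def ForbiddenL1 {n m : ℕ} (H : Matrix (Fin n) (Fin m) ℝ) (y : Fin n → ℝ)
    (α : ℝ) (J : Finset (Fin m)) : Prop :=
  ∀ x : Fin m → ℝ, (∀ j ∉ J, x j = 0) → α < l1Misfit H y x

/-- `J` is a forbidden support for the ℓ∞ problem. -/
def ForbiddenLinf {n m : ℕ} (H : Matrix (Fin n) (Fin m) ℝ) (y : Fin n → ℝ)
    (α : ℝ) (J : Finset (Fin m)) : Prop :=
  ∀ x : Fin m → ℝ, (∀ j ∉ J, x j = 0) → α < linfMisfit H y x

/-- The support of a vector `x`, as a finite set of indices. -/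
def suppSet {m : ℕ} (x : Fin m → ℝ) : Finset (Fin m) :=
  Finset.univ.filter fun j => x j ≠ 0

/-- the forbidden support family inequality for the ℓ∞ problem. -/
theorem forbidden_support_family_inequality_linf {n m : ℕ}
    (H : Matrix (Fin n) (Fin m) ℝ) (y : Fin n → ℝ) (α : ℝ) (hα : 0 ≤ α)
    (𝒥 : Finset (Finset (Fin m))) (h𝒥ne : 𝒥.Nonempty)
    (h𝒥 : ∀ J ∈ 𝒥, ForbiddenLinf H y α J)
    (Jnone Jsome : Finset (Fin m))
    (hnone : Jnone = (Finset.univ.filter fun j => ∃ J ∈ 𝒥, j ∈ J)ᶜ)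
    (hsome : Jsome = (Jnone ∪ Finset.univ.filter fun j => ∀ J ∈ 𝒥, j ∈ J)ᶜ)
    (x : Fin m → ℝ) (hx : linfMisfit H y x ≤ α) :
    2 ≤ 2 * (suppSet x ∩ Jnone).card + (suppSet x ∩ Jsome).card := by
  by_contra h
  push_neg at h
  have ha : (suppSet x ∩ Jnone).card = 0 := by omega
  have hb : (suppSet x ∩ Jsome).card ≤ 1 := by omega
  subst hnone hsome
  -- every support index lies in some J
  have hnone' : ∀ j, x j ≠ 0 → ∃ J ∈ 𝒥, j ∈ J := by
    intro j hj
    by_contra hc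
    have hmem : j ∈ suppSet x ∩ (Finset.univ.filter fun j => ∃ J ∈ 𝒥, j ∈ J)ᶜ :=
      Finset.mem_inter.mpr ⟨by simp [suppSet, hj], by simpa using hc⟩
    rw [Finset.card_eq_zero] at ha
    rw [ha] at hmem
    exact absurd hmem (Finset.notMem_empty j)
  have key : ∃ J ∈ 𝒥, ∀ j, x j ≠ 0 → j ∈ J := by
    by_cases hall : ∀ j, x j ≠ 0 → ∀ J ∈ 𝒥, j ∈ J
    · obtain ⟨J, hJ⟩ := h𝒥ne
      exact ⟨J, hJ, fun j hj => hall j hj J hJ⟩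
    · push_neg at hall
      obtain ⟨j₀, hj₀, J₀, hJ₀, hj₀J₀⟩ := hall
      obtain ⟨J₁, hJ₁, hj₀J₁⟩ := hnone' j₀ hj₀
      have hj₀some : j₀ ∈ suppSet x ∩
          ((Finset.univ.filter fun j => ∃ J ∈ 𝒥, j ∈ J)ᶜ ∪
            Finset.univ.filter fun j => ∀ J ∈ 𝒥, j ∈ J)ᶜ := by
        simp [suppSet, hj₀]
        exact ⟨⟨J₁, hJ₁, hj₀J₁⟩, ⟨J₀, hJ₀, hj₀J₀⟩⟩
      refine ⟨J₁, hJ₁, fun j hj => ?_⟩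
      by_cases hje : j = j₀
      · subst hje; exact hj₀J₁
      · by_cases hjall : ∀ J ∈ 𝒥, j ∈ J
        · exact hjall J₁ hJ₁
        · push_neg at hjall
          obtain ⟨J₂, hJ₂, hjJ₂⟩ := hjall
          obtain ⟨J₃, hJ₃, hjJ₃⟩ := hnone' j hj
          have hjsome : j ∈ suppSet x ∩
              ((Finset.univ.filter fun j => ∃ J ∈ 𝒥, j ∈ J)ᶜ ∪
                Finset.univ.filter fun j => ∀ J ∈ 𝒥, j ∈ J)ᶜ := by
            simp [suppSet, hj]
            exact ⟨⟨J₃, hJ₃, hjJ₃⟩, ⟨J₂, hJ₂, hjJ₂⟩⟩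
          rw [Finset.card_le_one] at hb
          exact absurd (hb _ hjsome _ hj₀some) hje
  obtain ⟨J, hJ, hsupp⟩ := key
  have := h𝒥 J hJ x (fun j hjJ => by
    by_contra hxj
    exact hjJ (hsupp j hxj))
  linarith
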